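/- arXiv:1212.4411 — 2 statements merged into one kernel-verified Lean document; each statement's English description precedes it below -/
import Mathlib

section
/- Let G be a finite connected simple graph, let σ be an automorphism of G, and let F be a subset of V(G) such that the five sets F, σ(F), σ²(F), σ³(F), σ⁴(F) form a partition of V(G). Then for every natural number λ ≥ 1, 2·W_λ(G) = 5·D_λ(F, V(G)). -/
/-- The λ-Wiener index of a graph: `W_λ(G) = Σ_{{u,v}} d_G(u,v)^λ`, the sum running over
all unordered pairs of distinct vertices. -/
noncomputable def wienerL {V : Type*} [Fintype V] [DecidableEq V]
    (G : SimpleGraph V) (l : ℕ) : ℕ :=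
  ∑ p ∈ Finset.univ.filter (fun p : Sym2 V => ¬ p.IsDiag),
    Sym2.lift ⟨fun u v => G.dist u v ^ l, fun u v => by simp [SimpleGraph.dist_comm]⟩ p

/-- `D_λ(F, K) = Σ_{u∈F} Σ_{v∈K} d_G(u,v)^λ`. -/
noncomputable def Dl {V : Type*} (G : SimpleGraph V) (l : ℕ) (F K : Finset V) : ℕ :=
  ∑ u ∈ F, ∑ v ∈ K, G.dist u v ^ l

lemma iso_dist_le {V : Type*} (G : SimpleGraph V) (hG : G.Connected) (σ : G ≃g G) (u v : V) :
    G.dist (σ u) (σ v) ≤ G.dist u v := by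
  obtain ⟨p, hp⟩ := hG.exists_walk_length_eq_dist u v
  calc G.dist (σ u) (σ v) ≤ (p.map σ.toHom).length := SimpleGraph.dist_le _
    _ = p.length := p.length_map _
    _ = G.dist u v := hp

lemma iso_dist_eq {V : Type*} (G : SimpleGraph V) (hG : G.Connected) (σ : G ≃g G) (u v : V) :
    G.dist (σ u) (σ v) = G.dist u v := by
  refine le_antisymm (iso_dist_le G hG σ u v) ?_
  have := iso_dist_le G hG σ.symm (σ u) (σ v)
  simpa using this

lemma iso_iter_dist_eq {V : Type*} (G : SimpleGraph V) (hG : G.Connected) (σ : G ≃g G)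
    (n : ℕ) (u v : V) : G.dist ((⇑σ)^[n] u) ((⇑σ)^[n] v) = G.dist u v := by
  induction n with
  | zero => simp
  | succ n ih =>
    rw [Function.iterate_succ_apply', Function.iterate_succ_apply',
      iso_dist_eq G hG σ, ih]

/-- If `σ` is an automorphism of a finite connected simple graph `G` and
`F, σ(F), σ²(F), σ³(F), σ⁴(F)` partition the vertex set, then for every `λ ≥ 1`,
`2·W_λ(G) = 5·D_λ(F, V(G))`. -/
theorem stmt7 {V : Type*} [Fintype V] [DecidableEq V]
    (G : SimpleGraph V) (hG : G.Connected) (σ : G ≃g G) (F : Finset V)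
    (hdisj : ∀ i j : Fin 5, i ≠ j →
      Disjoint (F.image ((⇑σ)^[(i : ℕ)])) (F.image ((⇑σ)^[(j : ℕ)])))
    (hcover : Finset.univ.biUnion (fun i : Fin 5 => F.image ((⇑σ)^[(i : ℕ)])) = Finset.univ)
    (l : ℕ) (hl : 1 ≤ l) :
    2 * wienerL G l = 5 * Dl G l F Finset.univ := by
  classical
  set f : Sym2 V → ℕ :=
    Sym2.lift ⟨fun u v => G.dist u v ^ l, fun u v => by simp [SimpleGraph.dist_comm]⟩ with hf
  have key : 2 * wienerL G l = ∑ u : V, ∑ v : V, G.dist u v ^ l := by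
    have hmaps : ∀ x ∈ Finset.univ.offDiag (α := V),
        Sym2.mk x.1 x.2 ∈ Finset.univ.filter (fun p : Sym2 V => ¬ p.IsDiag) := by
      rintro ⟨a, b⟩ hx
      simp only [Finset.mem_offDiag] at hx
      simp [hx.2.2]
    have hfib := Finset.sum_fiberwise_of_maps_to hmaps (fun x : V × V => f (Sym2.mk x.1 x.2))
    have hinner : ∀ p ∈ Finset.univ.filter (fun p : Sym2 V => ¬ p.IsDiag),
        (∑ x ∈ Finset.univ.offDiag.filter (fun x : V × V => Sym2.mk x.1 x.2 = p),
          f (Sym2.mk x.1 x.2)) = 2 * f p := by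
      intro p hp
      simp only [Finset.mem_filter] at hp
      induction p with
      | _ a b =>
        have hab : a ≠ b := by simpa using hp.2
        have hset : Finset.univ.offDiag.filter (fun x : V × V => Sym2.mk x.1 x.2 = s(a, b))
            = {(a, b), (b, a)} := by
          ext ⟨c, d⟩
          simp only [Finset.mem_filter, Finset.mem_offDiag, Finset.mem_insert,
            Finset.mem_singleton, Prod.mk.injEq, Sym2.eq_iff, Finset.mem_univ, true_and]
          constructor
          · rintro ⟨hcd, (⟨rfl, rfl⟩ | ⟨rfl, rfl⟩)⟩
            · exact Or.inl ⟨rfl, rfl⟩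
            · exact Or.inr ⟨rfl, rfl⟩
          · rintro (⟨rfl, rfl⟩ | ⟨rfl, rfl⟩)
            · exact ⟨hab, Or.inl ⟨rfl, rfl⟩⟩
            · exact ⟨hab.symm, Or.inr ⟨rfl, rfl⟩⟩
        rw [hset]
        rw [Finset.sum_pair (by simp [hab, Ne.symm hab, Prod.ext_iff])]
        have : s((b : V), a) = s(a, b) := Sym2.eq_swap
        rw [this, two_mul]
    have h2 : (∑ x ∈ Finset.univ.offDiag, f (Sym2.mk x.1 x.2)) = 2 * wienerL G l := by
      rw [← hfib]
      calc ∑ p ∈ Finset.univ.filter (fun p : Sym2 V => ¬ p.IsDiag),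
            ∑ x ∈ Finset.univ.offDiag.filter (fun x : V × V => Sym2.mk x.1 x.2 = p), f (Sym2.mk x.1 x.2)
          = ∑ p ∈ Finset.univ.filter (fun p : Sym2 V => ¬ p.IsDiag), 2 * f p :=
            Finset.sum_congr rfl hinner
        _ = 2 * ∑ p ∈ Finset.univ.filter (fun p : Sym2 V => ¬ p.IsDiag), f p :=
            (Finset.mul_sum _ _ _).symm
        _ = 2 * wienerL G l := rfl
    have hdiag : ∀ x ∈ (Finset.univ ×ˢ Finset.univ).filter (fun x : V × V => ¬ x.1 ≠ x.2),
        f (Sym2.mk x.1 x.2) = 0 := by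
      intro x hx
      simp only [Finset.mem_filter, not_not] at hx
      show G.dist x.1 x.2 ^ l = 0
      rw [hx.2, SimpleGraph.dist_self, zero_pow (by omega)]
    have hfull : (∑ x ∈ Finset.univ ×ˢ Finset.univ, f (Sym2.mk x.1 x.2))
        = ∑ x ∈ Finset.univ.offDiag, f (Sym2.mk x.1 x.2) := by
      rw [← Finset.sum_filter_add_sum_filter_not (Finset.univ ×ˢ Finset.univ)
        (fun x : V × V => x.1 ≠ x.2) (fun x => f (Sym2.mk x.1 x.2))]
      rw [Finset.sum_eq_zero hdiag, add_zero]
      congr 1; ext ⟨a, b⟩; simp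
    rw [← h2, ← hfull, Finset.sum_product]
    rfl
  have hpart : ∀ g : V → ℕ, ∑ u : V, g u
      = ∑ i : Fin 5, ∑ u ∈ F.image ((⇑σ)^[(i : ℕ)]), g u := by
    intro g
    rw [← hcover, Finset.sum_biUnion (fun i _ j _ hij => hdisj i j hij)]
  rw [key, hpart (fun u => ∑ v : V, G.dist u v ^ l)]
  have heach : ∀ i : Fin 5, ∑ u ∈ F.image ((⇑σ)^[(i : ℕ)]), ∑ v : V, G.dist u v ^ l
      = Dl G l F Finset.univ := by
    intro i
    have hinj : Function.Injective ((⇑σ)^[(i : ℕ)]) :=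
      Function.Injective.iterate σ.injective (i : ℕ)
    rw [Finset.sum_image (fun a _ b _ h => hinj h)]
    unfold Dl
    apply Finset.sum_congr rfl
    intro u _
    have hbij : Function.Bijective ((⇑σ)^[(i : ℕ)]) :=
      Function.Bijective.iterate σ.toEquiv.bijective (i : ℕ)
    rw [← Equiv.sum_comp (Equiv.ofBijective _ hbij) (fun v => G.dist ((⇑σ)^[(i:ℕ)] u) v ^ l)]
    refine Finset.sum_congr rfl (fun v _ => ?_)
    show G.dist ((⇑σ)^[(i:ℕ)] u) ((⇑σ)^[(i:ℕ)] v) ^ l = G.dist u v ^ l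
    rw [iso_iter_dist_eq G hG σ]
  rw [Finset.sum_congr rfl (fun i _ => heach i)]
  simp [Finset.card_univ, mul_comm]
end

section
/- Let G be a finite connected simple graph, let σ be an automorphism of G, and let F be a subset of V(G) such that the five sets F, σ(F), σ²(F), σ³(F), σ⁴(F) form a partition of V(G). Set A₂ = F ∪ σ(F) and A₃ = F ∪ σ(F) ∪ σ²(F). Then for every natural number λ, D_λ(F, V(G)) = D_λ(A₃, A₃) − D_λ(A₂, A₂). -/
section aux
variable {V : Type*} [Fintype V] [DecidableEq V] {G : SimpleGraph V}

lemma dist_map_aux (hG : G.Connected) (σ : G ≃g G) (u v : V) :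
    G.dist (σ u) (σ v) ≤ G.dist u v := by
  obtain ⟨p, hp⟩ := hG.exists_walk_length_eq_dist u v
  calc G.dist (σ u) (σ v) ≤ (p.map σ.toHom).length := SimpleGraph.dist_le _
    _ = G.dist u v := by rw [SimpleGraph.Walk.length_map, hp]

lemma dist_map (hG : G.Connected) (σ : G ≃g G) (u v : V) :
    G.dist (σ u) (σ v) = G.dist u v := by
  refine le_antisymm (dist_map_aux hG σ u v) ?_
  have := dist_map_aux hG σ.symm (σ u) (σ v)
  simpa using this

lemma Dl_comm (l : ℕ) (A B : Finset V) : Dl G l A B = Dl G l B A := by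
  rw [Dl, Dl, Finset.sum_comm]
  simp [SimpleGraph.dist_comm]

lemma Dl_image (hG : G.Connected) (σ : G ≃g G) (l : ℕ) (A B : Finset V) :
    Dl G l (A.image ⇑σ) (B.image ⇑σ) = Dl G l A B := by
  have hinj : Function.Injective (⇑σ) := fun a b h => σ.toEquiv.injective h
  rw [Dl, Dl, Finset.sum_image (fun a _ b _ h => hinj h)]
  refine Finset.sum_congr rfl fun u _ => ?_
  rw [Finset.sum_image (fun a _ b _ h => hinj h)]
  simp [dist_map hG]

lemma Dl_iterate (hG : G.Connected) (σ : G ≃g G) (l : ℕ) (A B : Finset V) (i : ℕ) :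
    Dl G l (A.image ((⇑σ)^[i])) (B.image ((⇑σ)^[i])) = Dl G l A B := by
  induction i with
  | zero => simp
  | succ n ih =>
      have h : ∀ C : Finset V, C.image ((⇑σ)^[n+1]) = (C.image ((⇑σ)^[n])).image ⇑σ := by
        intro C
        rw [Finset.image_image, Function.iterate_succ']
      rw [h, h, Dl_image hG, ih]

lemma Dl_union_left (l : ℕ) (A B K : Finset V) (h : Disjoint A B) :
    Dl G l (A ∪ B) K = Dl G l A K + Dl G l B K := by
  rw [Dl, Dl, Dl, Finset.sum_union h]

lemma Dl_union_right (l : ℕ) (K A B : Finset V) (h : Disjoint A B) :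
    Dl G l K (A ∪ B) = Dl G l K A + Dl G l K B := by
  rw [Dl, Dl, Dl, ← Finset.sum_add_distrib]
  exact Finset.sum_congr rfl fun u _ => Finset.sum_union h

end aux

/-- If `σ` is an automorphism of a finite connected simple graph `G` and
`F, σ(F), σ²(F), σ³(F), σ⁴(F)` partition the vertex set, then with `A₂ = F ∪ σ(F)` and
`A₃ = F ∪ σ(F) ∪ σ²(F)` one has `D_λ(F, V(G)) = D_λ(A₃, A₃) − D_λ(A₂, A₂)`. -/
theorem stmt8 {V : Type*} [Fintype V] [DecidableEq V]
    (G : SimpleGraph V) (hG : G.Connected) (σ : G ≃g G) (F : Finset V)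
    (hdisj : ∀ i j : Fin 5, i ≠ j →
      Disjoint (F.image ((⇑σ)^[(i : ℕ)])) (F.image ((⇑σ)^[(j : ℕ)])))
    (hcover : Finset.univ.biUnion (fun i : Fin 5 => F.image ((⇑σ)^[(i : ℕ)])) = Finset.univ)
    (l : ℕ) :
    (Dl G l F Finset.univ : ℤ) =
      (Dl G l (F ∪ F.image ⇑σ ∪ F.image ((⇑σ)^[2]))
            (F ∪ F.image ⇑σ ∪ F.image ((⇑σ)^[2])) : ℤ) -
        (Dl G l (F ∪ F.image ⇑σ) (F ∪ F.image ⇑σ) : ℤ) := by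
  have hinj : Function.Injective ⇑σ := σ.toEquiv.injective
  set Fi : ℕ → Finset V := fun i => F.image ((⇑σ)^[i]) with hFi
  have hF0 : Fi 0 = F := by simp [hFi]
  have hF1 : Fi 1 = F.image ⇑σ := by simp [hFi]
  -- σ⁵(F) = F
  have hdisj' : ∀ i j : ℕ, i < 5 → j < 5 → i ≠ j → Disjoint (Fi i) (Fi j) := by
    intro i j hi hj hij
    exact hdisj ⟨i, hi⟩ ⟨j, hj⟩ (by simpa [Fin.ext_iff] using hij)
  have himg : ∀ i : ℕ, Fi (i + 1) = (Fi i).image ⇑σ := by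
    intro i
    simp only [hFi, Finset.image_image]
    rw [Function.iterate_succ']
  have hdisj5 : ∀ j : ℕ, 1 ≤ j → j < 5 → Disjoint (Fi 5) (Fi j) := by
    intro j h1 h5
    obtain ⟨k, rfl⟩ := Nat.exists_eq_add_of_le h1
    have hk : 1 + k = k + 1 := by omega
    rw [hk, himg 4, himg k]
    exact (Finset.disjoint_image hinj).2 (hdisj' 4 k (by omega) (by omega) (by omega))
  have hF5 : Fi 5 = F := by
    -- Fi 5 ⊆ F since it is disjoint from Fi 1..4 and the five sets cover univ
    have hsub : Fi 5 ⊆ F := by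
      intro x hx
      have hx' : x ∈ Finset.univ.biUnion (fun i : Fin 5 => F.image ((⇑σ)^[(i : ℕ)])) := by
        rw [hcover]; exact Finset.mem_univ x
      rw [Finset.mem_biUnion] at hx'
      obtain ⟨i, _, hxi⟩ := hx'
      have hxi' : x ∈ Fi (i : ℕ) := hxi
      fin_cases i
      · simpa [hFi] using hxi'
      · exact absurd hxi' (Finset.disjoint_left.1 (hdisj5 1 (by omega) (by omega)) hx)
      · exact absurd hxi' (Finset.disjoint_left.1 (hdisj5 2 (by omega) (by omega)) hx)
      · exact absurd hxi' (Finset.disjoint_left.1 (hdisj5 3 (by omega) (by omega)) hx)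
      · exact absurd hxi' (Finset.disjoint_left.1 (hdisj5 4 (by omega) (by omega)) hx)
    have hcard : F.card ≤ (Fi 5).card := by
      rw [hFi]
      exact le_of_eq (Finset.card_image_of_injective F (hinj.iterate 5)).symm
    exact Finset.eq_of_subset_of_card_le hsub hcard
  -- abbreviate d k = Dl G l F (Fi k)
  set d : ℕ → ℕ := fun k => Dl G l F (Fi k) with hd
  -- cross terms
  have hcross : ∀ i k : ℕ, Dl G l (Fi i) (Fi (k + i)) = d k := by
    intro i k
    have h1 : Fi (k + i) = (Fi k).image ((⇑σ)^[i]) := by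
      simp only [hFi, Finset.image_image]
      rw [← Function.iterate_add, Nat.add_comm]
    rw [h1, hFi]
    have := Dl_iterate hG σ l F (Fi k) i
    rw [hFi] at this
    rw [this]
  have hd3 : d 3 = d 2 := by
    have h1 : Dl G l (Fi 2) (Fi (3 + 2)) = d 3 := hcross 2 3
    rw [hF5] at h1
    have h2 : Dl G l (Fi 0) (Fi (2 + 0)) = d 2 := hcross 0 2
    rw [hF0] at h2
    calc d 3 = Dl G l (Fi 2) F := h1.symm
      _ = Dl G l F (Fi 2) := Dl_comm _ _ _
      _ = d 2 := h2
  have hd4 : d 4 = d 1 := by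
    have h1 : Dl G l (Fi 1) (Fi (4 + 1)) = d 4 := hcross 1 4
    rw [hF5] at h1
    have h2 : Dl G l (Fi 0) (Fi (1 + 0)) = d 1 := hcross 0 1
    rw [hF0] at h2
    calc d 4 = Dl G l (Fi 1) F := h1.symm
      _ = Dl G l F (Fi 1) := Dl_comm _ _ _
      _ = d 1 := h2
  -- expand Dl F univ
  have huniv : Dl G l F Finset.univ = d 0 + d 1 + d 2 + d 3 + d 4 := by
    calc Dl G l F Finset.univ
        = ∑ u ∈ F, ∑ i : Fin 5, ∑ v ∈ Fi (i : ℕ), G.dist u v ^ l := by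
          rw [Dl, ← hcover]
          exact Finset.sum_congr rfl fun u _ =>
            Finset.sum_biUnion (fun i _ j _ hij => hdisj i j hij)
      _ = ∑ i : Fin 5, ∑ u ∈ F, ∑ v ∈ Fi (i : ℕ), G.dist u v ^ l := Finset.sum_comm
      _ = d 0 + d 1 + d 2 + d 3 + d 4 := by rw [Fin.sum_univ_five]; rfl
  -- expand the A₂ and A₃ terms
  have hD01 : Disjoint F (F.image ⇑σ) := by
    have := hdisj' 0 1 (by omega) (by omega) (by omega)
    simpa [hF0, hF1, hFi] using this
  have hD02 : Disjoint F (F.image ((⇑σ)^[2])) := by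
    have := hdisj' 0 2 (by omega) (by omega) (by omega)
    simpa [hF0, hFi] using this
  have hD12 : Disjoint (F.image ⇑σ) (F.image ((⇑σ)^[2])) := by
    have := hdisj' 1 2 (by omega) (by omega) (by omega)
    simpa [hF1, hFi] using this
  have hD012 : Disjoint (F ∪ F.image ⇑σ) (F.image ((⇑σ)^[2])) :=
    Finset.disjoint_union_left.2 ⟨hD02, hD12⟩
  -- values of mixed terms
  have c01 : Dl G l F (F.image ⇑σ) = d 1 := by rw [hd]; simp only [hF1]
  have c02 : Dl G l F (F.image ((⇑σ)^[2])) = d 2 := rfl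
  have c00 : Dl G l F F = d 0 := by rw [hd]; simp only [hF0]
  have c10 : Dl G l (F.image ⇑σ) F = d 1 := by rw [Dl_comm, c01]
  have c11 : Dl G l (F.image ⇑σ) (F.image ⇑σ) = d 0 := by
    rw [← hF1]
    have := hcross 1 0
    simpa using this
  have c12 : Dl G l (F.image ⇑σ) (F.image ((⇑σ)^[2])) = d 1 := by
    rw [← hF1]
    have := hcross 1 1
    exact this
  have c20 : Dl G l (F.image ((⇑σ)^[2])) F = d 2 := by rw [Dl_comm, c02]
  have c21 : Dl G l (F.image ((⇑σ)^[2])) (F.image ⇑σ) = d 1 := by rw [Dl_comm, c12]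
  have c22 : Dl G l (F.image ((⇑σ)^[2])) (F.image ((⇑σ)^[2])) = d 0 := by
    have := hcross 2 0
    exact this
  have hA2 : Dl G l (F ∪ F.image ⇑σ) (F ∪ F.image ⇑σ) = 2 * d 0 + 2 * d 1 := by
    rw [Dl_union_left _ _ _ _ hD01, Dl_union_right _ _ _ _ hD01,
        Dl_union_right _ _ _ _ hD01, c00, c01, c10, c11]
    ring
  have hA3 : Dl G l (F ∪ F.image ⇑σ ∪ F.image ((⇑σ)^[2]))
      (F ∪ F.image ⇑σ ∪ F.image ((⇑σ)^[2])) = 3 * d 0 + 4 * d 1 + 2 * d 2 := by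
    simp only [Dl_union_left _ _ _ _ hD012, Dl_union_right _ _ _ _ hD012,
      Dl_union_left _ _ _ _ hD01, Dl_union_right _ _ _ _ hD01,
      c00, c01, c02, c10, c11, c12, c20, c21, c22]
    ring
  rw [huniv, hA2, hA3, hd3, hd4]
  push_cast
  ring
end
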